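/- Let (P_θ)_{θ∈Θ} be a statistical model on a sample space Ω (a Markov kernel from a measurable space Θ to a measurable space Ω) and let κ ∈ (0,1). (a) If f is a p-function w.r.t. the model (P_θ), then ω ↦ κ·f(ω)^{κ−1} (with 0^{κ−1} = ∞) is an e-function w.r.t. the model, i.e. ∫ κ·f^{κ−1} dP_θ ≤ 1 for every θ ∈ Θ. (b) If f is an e-function w.r.t. the model, then ω ↦ min(1, 1/f(ω)) is a p-function w.r.t. the model, i.e. P_θ{ω : min(1, 1/f(ω)) ≤ ε} ≤ ε for every θ ∈ Θ and every ε > 0. -/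

import Mathlib

open MeasureTheory ProbabilityTheory Set intervalIntegral
open scoped ENNReal


lemma aux1 {κ : ℝ} (hκ : κ ∈ Set.Ioo (0:ℝ) 1) {a : ℝ} (ha : 0 < a) (ha1 : a ≤ 1) :
    ∫⁻ t in Set.Ioo a 1, ENNReal.ofReal (t ^ (κ-2)) = ENNReal.ofReal ((a^(κ-1) - 1)/(1-κ)) := by
  obtain ⟨hκ0, hκ1⟩ := hκ
  have hInt : IntegrableOn (fun t : ℝ => t ^ (κ-2)) (Set.Ioo a 1) := by
    have hc : ContinuousOn (fun t : ℝ => t ^ (κ-2)) (Set.Icc a 1) := fun t ht =>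
      (Real.continuousAt_rpow_const t _ (Or.inl (lt_of_lt_of_le ha ht.1).ne')).continuousWithinAt
    exact (hc.integrableOn_Icc).mono_set Set.Ioo_subset_Icc_self
  rw [← ofReal_integral_eq_lintegral_ofReal hInt]
  · congr 1
    have h1 : ∫ t in Set.Ioo a 1, t ^ (κ-2) = ∫ t in a..1, t ^ (κ-2) := by
      rw [intervalIntegral.integral_of_le ha1, ← MeasureTheory.integral_Ioc_eq_integral_Ioo]
    rw [h1, integral_rpow (Or.inr ⟨by linarith, by
        rw [Set.uIcc_of_le ha1]; exact fun h => absurd h.1 (not_le.mpr ha)⟩)]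
    have : κ - 2 + 1 = κ - 1 := by ring
    rw [this, Real.one_rpow]
    rw [div_eq_div_iff (by linarith) (by linarith)]
    ring
  · filter_upwards [self_mem_ae_restrict (measurableSet_Ioo : MeasurableSet (Set.Ioo a 1))] with t ht
    exact Real.rpow_nonneg (le_of_lt (ha.trans ht.1)) _

lemma aux2 {κ : ℝ} (hκ : κ ∈ Set.Ioo (0:ℝ) 1) :
    ∫⁻ t in Set.Ioo (0:ℝ) 1, ENNReal.ofReal (t ^ (κ-1)) = ENNReal.ofReal κ⁻¹ := by
  obtain ⟨hκ0, hκ1⟩ := hκ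
  have hInt : IntegrableOn (fun t : ℝ => t ^ (κ-1)) (Set.Ioo (0:ℝ) 1) := by
    have := intervalIntegrable_rpow' (a := (0:ℝ)) (b := 1) (r := κ-1) (by linarith)
    rw [intervalIntegrable_iff, Set.uIoc_of_le zero_le_one] at this
    exact this.mono_set Set.Ioo_subset_Ioc_self
  rw [← ofReal_integral_eq_lintegral_ofReal hInt]
  · congr 1
    have h1 : ∫ t in Set.Ioo (0:ℝ) 1, t ^ (κ-1) = ∫ t in (0:ℝ)..1, t ^ (κ-1) := by
      rw [intervalIntegral.integral_of_le zero_le_one, ← MeasureTheory.integral_Ioc_eq_integral_Ioo]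
    rw [h1, integral_rpow (Or.inl (by linarith))]
    have : κ - 1 + 1 = κ := by ring
    rw [this, Real.one_rpow, Real.zero_rpow hκ0.ne']
    ring
  · filter_upwards [self_mem_ae_restrict (measurableSet_Ioo : MeasurableSet (Set.Ioo (0:ℝ) 1))] with t ht
    exact Real.rpow_nonneg (le_of_lt ht.1) _

lemma auxPt {κ : ℝ} (hκ : κ ∈ Set.Ioo (0:ℝ) 1) {x : ℝ≥0∞} (hx0 : x ≠ 0) (hx1 : x ≤ 1) :
    x ^ (κ-1) ≤ 1 + ENNReal.ofReal (1-κ) *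
      ∫⁻ t in Set.Ioo (0:ℝ) 1, (if x < ENNReal.ofReal t then ENNReal.ofReal (t^(κ-2)) else 0) := by
  obtain ⟨hκ0, hκ1⟩ := hκ
  have hxt : x ≠ ∞ := (hx1.trans_lt ENNReal.one_lt_top).ne
  set a := x.toReal with hadef
  have ha : 0 < a := ENNReal.toReal_pos hx0 hxt
  have hax : x = ENNReal.ofReal a := by rw [hadef, ENNReal.ofReal_toReal hxt]
  have ha1 : a ≤ 1 := by
    rw [hax] at hx1
    exact (ENNReal.ofReal_le_one).mp hx1
  have hI : (∫⁻ t in Set.Ioo (0:ℝ) 1,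
      (if x < ENNReal.ofReal t then ENNReal.ofReal (t^(κ-2)) else 0))
      = ENNReal.ofReal ((a^(κ-1) - 1)/(1-κ)) := by
    have hcong : ∫⁻ t in Set.Ioo (0:ℝ) 1,
        (if x < ENNReal.ofReal t then ENNReal.ofReal (t^(κ-2)) else 0)
        = ∫⁻ t in Set.Ioo (0:ℝ) 1, (Set.Ioi a).indicator (fun t => ENNReal.ofReal (t^(κ-2))) t := by
      apply setLIntegral_congr_fun measurableSet_Ioo
      intro t ht
      rw [Set.indicator_apply]
      have : x < ENNReal.ofReal t ↔ t ∈ Set.Ioi a := by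
        rw [hax, Set.mem_Ioi, ENNReal.ofReal_lt_ofReal_iff ht.1]
      simp only [this]
    rw [hcong, lintegral_indicator measurableSet_Ioi, Measure.restrict_restrict measurableSet_Ioi]
    have hset : Set.Ioi a ∩ Set.Ioo 0 1 = Set.Ioo a 1 := by
      ext t
      constructor
      · rintro ⟨h1, _, h3⟩; exact ⟨h1, h3⟩
      · rintro ⟨h1, h2⟩; exact ⟨h1, ha.trans h1, h2⟩
    rw [hset, aux1 ⟨hκ0, hκ1⟩ ha ha1]
  rw [hI, hax, ENNReal.ofReal_rpow_of_pos ha]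
  have h1le : 1 ≤ a ^ (κ-1) :=
    Real.one_le_rpow_of_pos_of_le_one_of_nonpos ha ha1 (by linarith)
  rw [← ENNReal.ofReal_mul (by linarith), mul_div_cancel₀ _ (by linarith : (1:ℝ)-κ ≠ 0)]
  rw [← ENNReal.ofReal_one, ← ENNReal.ofReal_add zero_le_one (by linarith)]
  rw [add_sub_cancel]

lemma partA {Ω : Type*} [MeasurableSpace Ω] (μ : Measure Ω) [IsProbabilityMeasure μ]
    {κ : ℝ} (hκ : κ ∈ Set.Ioo (0:ℝ) 1)
    (f : Ω → ℝ≥0∞) (hf : Measurable f) (hle : ∀ ω, f ω ≤ 1)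
    (hp : ∀ ε : ℝ≥0∞, 0 < ε → μ {ω | f ω ≤ ε} ≤ ε) :
    ∫⁻ ω, ENNReal.ofReal κ * f ω ^ (κ - 1) ∂μ ≤ 1 := by
  obtain ⟨hκ0, hκ1⟩ := hκ
  -- the zero set is null
  have hzero : μ {ω | f ω = 0} = 0 := by
    refine le_antisymm ?_ zero_le
    refine ENNReal.le_of_forall_pos_le_add fun ε hε _ => ?_
    rw [zero_add]
    calc μ {ω | f ω = 0} ≤ μ {ω | f ω ≤ (ε : ℝ≥0∞)} :=
        measure_mono (fun ω hω => by simp [Set.mem_setOf_eq.mp hω])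
      _ ≤ (ε : ℝ≥0∞) := hp _ (by exact_mod_cast hε)
  set F : Ω → ℝ → ℝ≥0∞ := fun ω t => if f ω < ENNReal.ofReal t then ENNReal.ofReal (t^(κ-2)) else 0
    with hF
  have hFmeas : Measurable (Function.uncurry F) := by
    apply Measurable.ite
    · exact measurableSet_lt (hf.comp measurable_fst)
        (ENNReal.measurable_ofReal.comp measurable_snd)
    · exact ENNReal.measurable_ofReal.comp (measurable_snd.pow_const _)
    · exact measurable_const
  have hImeas : Measurable fun ω => ∫⁻ t in Set.Ioo (0:ℝ) 1, F ω t :=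
    Measurable.lintegral_prod_right hFmeas
  -- pointwise a.e. bound
  have hae : ∀ᵐ ω ∂μ, ENNReal.ofReal κ * f ω ^ (κ - 1) ≤
      ENNReal.ofReal κ * (1 + ENNReal.ofReal (1-κ) * ∫⁻ t in Set.Ioo (0:ℝ) 1, F ω t) := by
    rw [ae_iff]
    refine measure_mono_null (fun ω hω => ?_) hzero
    simp only [Set.mem_setOf_eq, not_le] at hω
    by_contra hne
    exact absurd (mul_le_mul_right (auxPt ⟨hκ0, hκ1⟩ hne (hle ω)) (ENNReal.ofReal κ)) hω.not_ge
  calc ∫⁻ ω, ENNReal.ofReal κ * f ω ^ (κ - 1) ∂μ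
      ≤ ∫⁻ ω, ENNReal.ofReal κ * (1 + ENNReal.ofReal (1-κ) *
          ∫⁻ t in Set.Ioo (0:ℝ) 1, F ω t) ∂μ := lintegral_mono_ae hae
    _ = ENNReal.ofReal κ * (1 + ENNReal.ofReal (1-κ) *
          ∫⁻ ω, (∫⁻ t in Set.Ioo (0:ℝ) 1, F ω t) ∂μ) := by
        rw [lintegral_const_mul (f := fun ω => 1 + ENNReal.ofReal (1-κ) * ∫⁻ t in Set.Ioo (0:ℝ) 1, F ω t) _ ((measurable_const.add (hImeas.const_mul _)))]
        congr 1
        rw [lintegral_add_left measurable_const, lintegral_const_mul _ hImeas,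
          lintegral_const, measure_univ, mul_one]
    _ ≤ ENNReal.ofReal κ * (1 + ENNReal.ofReal (1-κ) * ENNReal.ofReal κ⁻¹) := by
        gcongr
        -- Tonelli then bound inner measure
        rw [lintegral_lintegral_swap (hFmeas.aemeasurable)]
        have hbound : ∀ᵐ t ∂(volume.restrict (Set.Ioo (0:ℝ) 1)),
            (∫⁻ ω, F ω t ∂μ) ≤ ENNReal.ofReal (t ^ (κ-1)) := by
          filter_upwards [self_mem_ae_restrict (measurableSet_Ioo :
            MeasurableSet (Set.Ioo (0:ℝ) 1))] with t ht
          have hms : MeasurableSet {ω | f ω < ENNReal.ofReal t} := hf measurableSet_Iio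
          have hin : (∫⁻ ω, F ω t ∂μ)
              = ENNReal.ofReal (t^(κ-2)) * μ {ω | f ω < ENNReal.ofReal t} := by
            rw [show (fun ω => F ω t) = ({ω | f ω < ENNReal.ofReal t}).indicator
                (fun _ => ENNReal.ofReal (t^(κ-2))) from funext fun ω => by
              simp [hF, Set.indicator_apply, Set.mem_setOf_eq]]
            exact lintegral_indicator_const hms _
          rw [hin]
          have hmle : μ {ω | f ω < ENNReal.ofReal t} ≤ ENNReal.ofReal t :=
            (measure_mono (fun ω (hω : f ω < _) => le_of_lt hω)).trans
              (hp _ (ENNReal.ofReal_pos.mpr ht.1))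
          calc ENNReal.ofReal (t^(κ-2)) * μ {ω | f ω < ENNReal.ofReal t}
              ≤ ENNReal.ofReal (t^(κ-2)) * ENNReal.ofReal t := mul_le_mul_right hmle _
            _ = ENNReal.ofReal (t ^ (κ-1)) := by
                rw [← ENNReal.ofReal_mul (Real.rpow_nonneg ht.1.le _)]
                congr 1
                nth_rewrite 2 [← Real.rpow_one t]
                rw [← Real.rpow_add ht.1]
                ring_nf
        calc (∫⁻ t in Set.Ioo (0:ℝ) 1, ∫⁻ ω, F ω t ∂μ)
            ≤ ∫⁻ t in Set.Ioo (0:ℝ) 1, ENNReal.ofReal (t ^ (κ-1)) := lintegral_mono_ae hbound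
          _ = ENNReal.ofReal κ⁻¹ := aux2 ⟨hκ0, hκ1⟩
    _ = 1 := by
        rw [← ENNReal.ofReal_mul (by linarith), ← ENNReal.ofReal_one,
          ← ENNReal.ofReal_add zero_le_one
            (mul_nonneg (by linarith) (inv_nonneg.mpr hκ0.le)),
          ← ENNReal.ofReal_mul (by linarith)]
        congr 1
        field_simp
        ring

/-- relation between p-functions and e-functions w.r.t. a statistical
model `(P_θ)_{θ∈Θ}` (a Markov kernel from `Θ` to `Ω`) and `κ ∈ (0,1)`.
(a) If `f` is a p-function w.r.t. the model, then `ω ↦ κ · f(ω)^(κ-1)` is an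
e-function w.r.t. the model (in `ℝ≥0∞`, `0 ^ (κ-1) = ∞`).
(b) If `f` is an e-function w.r.t. the model, then `ω ↦ min 1 (1/f(ω))` is a
p-function w.r.t. the model. -/
theorem stmt3 {Ω Θ : Type*} [MeasurableSpace Ω] [MeasurableSpace Θ]
    (P : Kernel Θ Ω) [IsMarkovKernel P]
    (κ : ℝ) (hκ : κ ∈ Set.Ioo (0 : ℝ) 1) :
    (∀ f : Ω → ℝ≥0∞, Measurable f → (∀ ω, f ω ≤ 1) →
      (∀ θ, ∀ ε : ℝ≥0∞, 0 < ε → P θ {ω | f ω ≤ ε} ≤ ε) →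
      ∀ θ, ∫⁻ ω, ENNReal.ofReal κ * f ω ^ (κ - 1) ∂(P θ) ≤ 1) ∧
    (∀ f : Ω → ℝ≥0∞, Measurable f → (∀ θ, ∫⁻ ω, f ω ∂(P θ) ≤ 1) →
      ∀ θ, ∀ ε : ℝ≥0∞, 0 < ε → P θ {ω | min 1 (f ω)⁻¹ ≤ ε} ≤ ε) := by
  constructor
  · intro f hf hle hp θ
    exact partA (P θ) hκ f hf hle (fun ε hε => hp θ ε hε)
  · intro f hf hint θ ε hε
    by_cases hε1 : 1 ≤ ε
    · calc P θ {ω | min 1 (f ω)⁻¹ ≤ ε} ≤ P θ Set.univ := measure_mono (Set.subset_univ _)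
      _ = 1 := measure_univ
      _ ≤ ε := hε1
    · push_neg at hε1
      have hsub : {ω | min 1 (f ω)⁻¹ ≤ ε} ⊆ {ω | ε⁻¹ ≤ f ω} := by
        intro ω hω
        simp only [Set.mem_setOf_eq, min_le_iff] at hω ⊢
        rcases hω with h | h
        · exact absurd h (not_le.mpr hε1)
        · exact ENNReal.inv_le_iff_inv_le.mp h
      calc P θ {ω | min 1 (f ω)⁻¹ ≤ ε} ≤ P θ {ω | ε⁻¹ ≤ f ω} := measure_mono hsub
      _ ≤ (∫⁻ ω, f ω ∂(P θ)) / ε⁻¹ :=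
          meas_ge_le_lintegral_div hf.aemeasurable
            (by simp [(hε1.trans ENNReal.one_lt_top).ne]) (by simp [hε.ne'])
      _ ≤ 1 / ε⁻¹ := ENNReal.div_le_div_right (hint θ) _
      _ = ε := by simp [one_div]
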